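/- Let ℓ and n be natural numbers with 0 < ℓ ≤ n and ℓ dividing n, let w₁, …, wₙ be nonnegative reals with average a = (1/n)·∑_{i=1}^n wᵢ, and consider n papers where paper i has ℓ weight entries: one entry of value wᵢ and ℓ − 1 entries of value 0. If there exists a valid assignment of the weight entries to the n reviewers whose sorted mean-weight vector equals the vector v ∈ ℝⁿ whose first n − n/ℓ coordinates are 0 and whose last n/ℓ coordinates are a, then the multiset {w₁, …, wₙ} can be partitioned into n/ℓ sub-multisets each of cardinality ℓ and each of sum ℓ·a. -/

import Mathlib

/-- An assignment of the weight entries `(i, s)` (paper `i`, entry `s`) to reviewers is valid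
if each reviewer gets exactly `ℓ` entries and no reviewer gets two entries from the same paper. -/
def ValidAssign (m k n ℓ : ℕ) (f : Fin m × Fin k → Fin n) : Prop :=
  (∀ j : Fin n, (Finset.univ.filter (fun e : Fin m × Fin k => f e = j)).card = ℓ) ∧
  ∀ (i : Fin m) (s s' : Fin k), f (i, s) = f (i, s') → s = s'

/-- The mean weight of reviewer `j`: `(1/ℓ)` times the sum of the values of the entries
assigned to `j`. -/
noncomputable def meanWeight (m k n ℓ : ℕ) (x : Fin m × Fin k → ℝ)
    (f : Fin m × Fin k → Fin n) (j : Fin n) : ℝ :=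
  (1 / (ℓ : ℝ)) * ∑ e ∈ Finset.univ.filter (fun e : Fin m × Fin k => f e = j), x e

private lemma hrepl {ι : Type*} [DecidableEq ι] (s : Finset ι) (d : ι → ℕ) :
    ∑ j ∈ s, Multiset.replicate (d j) (0:ℝ) = Multiset.replicate (∑ j ∈ s, d j) 0 := by
  induction s using Finset.induction_on with
  | empty => simp
  | insert _ _ hjs ih =>
    rw [Finset.sum_insert hjs, Finset.sum_insert hjs, ih, Multiset.replicate_add]

/-- Backward direction of the NP-hardness reduction: in the setting where paper `i` has one
entry of value `w i ≥ 0` and `ℓ - 1` zero entries, if some valid assignment has sorted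
mean-weight vector `v = (0, …, 0, a, …, a)` (with `n/ℓ` trailing `a`'s, `a` the average of the
`wᵢ`), then the multiset `{w₁, …, wₙ}` can be partitioned into `n/ℓ` sub-multisets each of
cardinality `ℓ` and sum `ℓ·a`. -/
theorem assignment_with_sorted_mean_vector_v_gives_partition
    (ℓ n : ℕ) (hℓ : 0 < ℓ) (hℓn : ℓ ≤ n) (hdvd : ℓ ∣ n)
    (w : Fin n → ℝ) (hw : ∀ i, 0 ≤ w i)
    (a : ℝ) (ha : a = (1 / (n : ℝ)) * ∑ i, w i)
    (f : Fin n × Fin ℓ → Fin n)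
    (hf : ValidAssign n ℓ n ℓ f)
    (hmeans : Multiset.map
        (meanWeight n ℓ n ℓ (fun e => if (e.2 : ℕ) = 0 then w e.1 else 0) f)
        (Finset.univ : Finset (Fin n)).val
      = Multiset.map (fun i : Fin n => if (i : ℕ) < n - n / ℓ then (0 : ℝ) else a)
          (Finset.univ : Finset (Fin n)).val) :
    ∃ P : Fin (n / ℓ) → Multiset ℝ,
      (∀ t, (P t).card = ℓ) ∧
      (∀ t, (P t).sum = (ℓ : ℝ) * a) ∧
      ∑ t : Fin (n / ℓ), P t = Multiset.map w (Finset.univ : Finset (Fin n)).val := by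
  classical
  have hn : 0 < n := lt_of_lt_of_le hℓ hℓn
  set x : Fin n × Fin ℓ → ℝ := fun e => if (e.2 : ℕ) = 0 then w e.1 else 0 with hx
  set z0 : Fin ℓ := ⟨0, hℓ⟩ with hz0
  set S : Fin n → Finset (Fin n) :=
    fun j => Finset.univ.filter (fun i => f (i, z0) = j) with hS
  set M : Fin n → Multiset ℝ := fun j => Multiset.map w (S j).val with hM
  -- relating mean weight to the sum over S j
  have hmean : ∀ j, meanWeight n ℓ n ℓ x f j = (1 / (ℓ : ℝ)) * ∑ i ∈ S j, w i := by
    intro j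
    unfold meanWeight
    congr 1
    rw [Finset.sum_filter, Finset.sum_filter, Fintype.sum_prod_type]
    have key : ∀ (i : Fin n) (s : Fin ℓ), (if f (i, s) = j then x (i, s) else 0)
        = if s = z0 then (if f (i, z0) = j then w i else 0) else 0 := by
      intro i s
      by_cases h : s = z0
      · subst h; simp [hx, hz0]
      · have hs : (s : ℕ) ≠ 0 := fun h0 => h (Fin.ext h0)
        simp [hx, h, hs]
    simp_rw [key]
    simp [Finset.sum_ite_eq']
  have hMsum : ∀ j, (M j).sum = ∑ i ∈ S j, w i := by
    intro j; rw [hM, Finset.sum_eq_multiset_sum]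
  have hMcard : ∀ j, (M j).card = (S j).card := by
    intro j; rw [hM, Multiset.card_map, Finset.card_def]
  -- card of S j is at most ℓ
  have hSle : ∀ j, (S j).card ≤ ℓ := by
    intro j
    rw [← hf.1 j]
    apply Finset.card_le_card_of_injOn (fun i => (i, z0))
    · intro i hi
      simp only [hS, Finset.coe_filter, Finset.mem_coe, Set.mem_setOf_eq, Finset.mem_filter, Finset.mem_univ, true_and] at hi ⊢
      exact hi
    · intro i _ i' _ h
      exact (Prod.mk.injEq _ _ _ _ ▸ h).1
  -- the S j partition univ
  have hpart : ∑ j : Fin n, (S j).val = (Finset.univ : Finset (Fin n)).val := by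
    refine Multiset.ext.2 fun i => ?_
    rw [Multiset.count_sum']
    simp only [hS, Finset.filter_val, Multiset.count_filter, Multiset.count_univ]
    simp [Finset.sum_ite_eq]
  have htotal : ∑ j : Fin n, M j = Multiset.map w (Finset.univ : Finset (Fin n)).val := by
    rw [← hpart]
    exact (map_sum (Multiset.mapAddMonoidHom w) (fun j => (S j).val) Finset.univ).symm
  -- each mean is 0 or a
  have hmem : ∀ j : Fin n, meanWeight n ℓ n ℓ x f j = 0 ∨ meanWeight n ℓ n ℓ x f j = a := by
    intro j
    have h1 : meanWeight n ℓ n ℓ x f j ∈ Multiset.map (meanWeight n ℓ n ℓ x f)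
        (Finset.univ : Finset (Fin n)).val :=
      Multiset.mem_map_of_mem _ (Finset.mem_univ j)
    rw [hmeans] at h1
    obtain ⟨i, _, hi⟩ := Multiset.mem_map.1 h1
    by_cases h : (i : ℕ) < n - n / ℓ
    · left; rw [← hi]; simp [h]
    · right; rw [← hi]; simp [h]
  have hℓR : (ℓ : ℝ) ≠ 0 := Nat.cast_ne_zero.2 hℓ.ne'
  -- zero-mean reviewers have all-zero weight sets
  have hzero : ∀ j : Fin n, meanWeight n ℓ n ℓ x f j = 0 →
      M j = Multiset.replicate (M j).card 0 := by
    intro j hj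
    rw [hmean j] at hj
    have hsum0 : ∑ i ∈ S j, w i = 0 := by
      field_simp at hj
      simpa using hj
    have hall : ∀ i ∈ S j, w i = 0 :=
      (Finset.sum_eq_zero_iff_of_nonneg (fun i _ => hw i)).1 hsum0
    refine (Multiset.eq_replicate_card).2 fun b hb => ?_
    rw [hM] at hb
    obtain ⟨i, hi, rfl⟩ := Multiset.mem_map.1 hb
    exact hall i hi
  by_cases hA0 : a = 0
  · -- degenerate case: all weights are zero
    subst hA0
    have hsum0 : ∑ i, w i = 0 := by
      have : (1 / (n : ℝ)) * ∑ i, w i = 0 := ha.symm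
      have hnR : (n : ℝ) ≠ 0 := Nat.cast_ne_zero.2 hn.ne'
      field_simp at this
      simpa using this
    have hall : ∀ i, w i = 0 := fun i =>
      (Finset.sum_eq_zero_iff_of_nonneg (fun i _ => hw i)).1 hsum0 i (Finset.mem_univ i)
    refine ⟨fun _ => Multiset.replicate ℓ 0, fun t => by simp, fun t => by simp, ?_⟩
    rw [Finset.sum_const, Finset.card_univ, Fintype.card_fin, Multiset.nsmul_replicate]
    symm
    refine Multiset.eq_replicate.2 ⟨?_, fun b hb => ?_⟩
    · simp [Nat.div_mul_cancel hdvd]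
    · obtain ⟨i, _, rfl⟩ := Multiset.mem_map.1 hb
      exact hall i
  · -- main case: a ≠ 0
    set A : Finset (Fin n) :=
      Finset.univ.filter (fun j => meanWeight n ℓ n ℓ x f j = a) with hA
    have hstep : n - n / ℓ < n := Nat.sub_lt hn (Nat.div_pos hℓn hℓ)
    have hAcard : A.card = n / ℓ := by
      have hc := congrArg (Multiset.count a) hmeans
      rw [Multiset.count_map, Multiset.count_map] at hc
      have hL : Multiset.card ((Finset.univ : Finset (Fin n)).val.filter
          (fun j => a = meanWeight n ℓ n ℓ x f j)) = A.card := by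
        have hAA : (Finset.univ.filter (fun j => a = meanWeight n ℓ n ℓ x f j)) = A := by
          rw [hA]
          apply Finset.filter_congr
          intro j _
          simp [eq_comm]
        rw [← Finset.filter_val, hAA, ← Finset.card_def]
      have hR : Multiset.card ((Finset.univ : Finset (Fin n)).val.filter
          (fun i : Fin n => a = if (i : ℕ) < n - n / ℓ then (0:ℝ) else a)) = n / ℓ := by
        rw [← Finset.filter_val]
        have : (Finset.univ.filter
            (fun i : Fin n => a = if (i : ℕ) < n - n / ℓ then (0:ℝ) else a))
            = Finset.Ici (⟨n - n / ℓ, hstep⟩ : Fin n) := by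
          ext i
          simp only [Finset.mem_filter, Finset.mem_univ, true_and, Finset.mem_Ici,
            Fin.le_def]
          by_cases h : (i : ℕ) < n - n / ℓ
          · simp only [if_pos h]
            constructor
            · intro hh; exact absurd hh hA0
            · intro hh; omega
          · simp [h, Nat.le_of_not_lt h]
        rw [this, ← Finset.card_def, Fin.card_Ici]
        exact Nat.sub_sub_self (Nat.div_le_self n ℓ)
      rw [hL, hR] at hc
      exact hc
    set c : Fin n → ℕ := fun j => (M j).card with hc
    -- total card is n
    have hcardtot : ∑ j : Fin n, c j = n := by
      have := congrArg Multiset.card htotal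
      rw [Multiset.card_sum] at this
      simpa using this
    have hsplitc : ∑ j ∈ A, c j + ∑ j ∈ Aᶜ, c j = n := by
      rw [Finset.sum_add_sum_compl]; exact hcardtot
    have hcle : ∀ j, c j ≤ ℓ := by
      intro j
      show (M j).card ≤ ℓ
      rw [hMcard]; exact hSle j
    have hpadA : ∑ j ∈ A, (ℓ - c j) = ∑ j ∈ Aᶜ, c j := by
      have h1 : ∑ j ∈ A, (ℓ - c j) + ∑ j ∈ A, c j = n := by
        rw [← Finset.sum_add_distrib]
        have : ∀ j ∈ A, ℓ - c j + c j = ℓ := fun j _ => Nat.sub_add_cancel (hcle j)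
        rw [Finset.sum_congr rfl this, Finset.sum_const, smul_eq_mul, hAcard,
          Nat.div_mul_cancel hdvd]
      omega
    -- sums on A
    have hMsumA : ∀ j ∈ A, (M j).sum = (ℓ : ℝ) * a := by
      intro j hj
      rw [hA, Finset.mem_filter] at hj
      have := hj.2
      rw [hmean j, ← hMsum j] at this
      field_simp at this
      linarith [this]
    -- off A : replicate of zeros
    have hMzero : ∀ j ∈ Aᶜ, M j = Multiset.replicate (c j) 0 := by
      intro j hj
      rw [Finset.mem_compl, hA, Finset.mem_filter] at hj
      have : meanWeight n ℓ n ℓ x f j = 0 := by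
        rcases hmem j with h | h
        · exact h
        · exact absurd h (by simpa using hj)
      exact hzero j this
    have hsumcompl : ∑ j ∈ Aᶜ, M j = Multiset.replicate (∑ j ∈ Aᶜ, c j) 0 := by
      rw [Finset.sum_congr rfl hMzero, hrepl]
    set e : Fin (n / ℓ) ≃ A := (A.equivFinOfCardEq hAcard).symm with he
    have hreidxM : ∑ t : Fin (n / ℓ), M (e t) = ∑ j ∈ A, M j := by
      rw [← Finset.sum_coe_sort A M]
      exact Equiv.sum_comp e (fun j : A => M (j : Fin n))
    have hreidxc : ∑ t : Fin (n / ℓ), (ℓ - c (e t)) = ∑ j ∈ A, (ℓ - c j) := by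
      rw [← Finset.sum_coe_sort A (fun j => ℓ - c j)]
      exact Equiv.sum_comp e (fun j : A => ℓ - c (j : Fin n))
    refine ⟨fun t => M (e t) + Multiset.replicate (ℓ - c (e t)) 0, fun t => ?_, fun t => ?_, ?_⟩
    · rw [Multiset.card_add, Multiset.card_replicate]
      exact Nat.add_sub_cancel' (hcle _)
    · rw [Multiset.sum_add, Multiset.sum_replicate, smul_zero, add_zero]
      exact hMsumA _ (e t).2
    · rw [Finset.sum_add_distrib, hreidxM, hrepl, hreidxc, hpadA, ← hsumcompl,
        Finset.sum_add_sum_compl, htotal]
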